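/- In a medium, if m and n are two concise messages transforming a state P, then Pm = Pn if and only if the contents (sets of tokens) of m and n are equal. -/

import Mathlib

variable {S : Type*}

/-- Result of applying message `m` (a list of tokens) to state `P`. -/
def mApply (m : List (S → S)) (P : S) : S := m.foldl (fun s τ => τ s) P

/-- `τ'` is a reverse of `τ`. -/
def IsReverse (τ τ' : S → S) : Prop := ∀ P Q : S, P ≠ Q → (τ P = Q ↔ τ' Q = P)

/-- `(S, T)` is a token system. -/
def IsTokenSystem (T : Set (S → S)) : Prop :=
  Nontrivial S ∧ T.Nonempty ∧ ∀ τ ∈ T, τ ≠ id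

/-- `m` is a message of the token system with token set `T`. -/
def IsMsg (T : Set (S → S)) (m : List (S → S)) : Prop := ∀ τ ∈ m, τ ∈ T

/-- `m` is stepwise effective for `P`. -/
def StepwiseEff : List (S → S) → S → Prop
  | [], _ => True
  | τ :: rest, P => τ P ≠ P ∧ StepwiseEff rest (τ P)

/-- `m` is consistent: it contains no token together with a reverse of it. -/
def Consistent (m : List (S → S)) : Prop :=
  ∀ τ ∈ m, ∀ τ' ∈ m, ¬ IsReverse τ τ'

/-- `m` is concise for `P`. -/
def Concise (T : Set (S → S)) (m : List (S → S)) (P : S) : Prop :=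
  IsMsg T m ∧ Consistent m ∧ StepwiseEff m P ∧ m.Nodup

/-- `m` is a return message for `P`. -/
def IsReturn (m : List (S → S)) (P : S) : Prop :=
  StepwiseEff m P ∧ mApply m P = P

/-- `m` is vacuous: its indices partition into pairs of mutually reverse tokens. -/
def Vacuous (m : List (S → S)) : Prop :=
  ∃ σ : Equiv.Perm (Fin m.length),
    (∀ i, σ i ≠ i) ∧ (∀ i, σ (σ i) = i) ∧
    ∀ i, IsReverse (m.get i) (m.get (σ i))

/-- `(S, T)` is a medium: token system satisfying [Ma] and [Mb]. -/
def IsMedium (T : Set (S → S)) : Prop :=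
  IsTokenSystem T ∧
  (∀ P Q : S, P ≠ Q → ∃ m, Concise T m P ∧ mApply m P = Q) ∧
  (∀ (m : List (S → S)) (P : S), IsMsg T m → IsReturn m P → Vacuous m)

/-- Content of a message: its set of tokens. -/
def msgContent (m : List (S → S)) : Set (S → S) := {τ | τ ∈ m}

/-- Token content of a state `P`. -/
def SContent (T : Set (S → S)) (P : S) : Set (S → S) :=
  {τ | ∃ (V : S) (m : List (S → S)), Concise T m V ∧ mApply m V = P ∧ τ ∈ m}

/-- `mr` is the reverse message `τ̃ₙ…τ̃₁` of `m = τ₁…τₙ`. -/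
def IsReverseOfMsg (m mr : List (S → S)) : Prop :=
  List.Forall₂ (fun τ τ' => IsReverse τ τ' ∧ IsReverse τ' τ) m mr.reverse

theorem mApply_nil (P : S) : mApply ([] : List (S → S)) P = P := rfl
theorem mApply_cons (τ : S → S) (m : List (S → S)) (P : S) :
    mApply (τ :: m) P = mApply m (τ P) := rfl
theorem mApply_append (m n : List (S → S)) (P : S) :
    mApply (m ++ n) P = mApply n (mApply m P) := by
  simp [mApply, List.foldl_append]

theorem stepwiseEff_append {m n : List (S → S)} {P : S} :
    StepwiseEff (m ++ n) P ↔ StepwiseEff m P ∧ StepwiseEff n (mApply m P) := by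
  induction m generalizing P with
  | nil => simp [StepwiseEff, mApply_nil]
  | cons τ l ih => simp [StepwiseEff, mApply_cons, ih, and_assoc]

theorem IsReverse.symm' {τ τ' : S → S} (h : IsReverse τ τ') : IsReverse τ' τ := by
  intro P Q hPQ
  exact (h Q P hPQ.symm).symm

theorem isReverse_unique {τ a b : S → S} (ha : IsReverse τ a) (hb : IsReverse τ b) : a = b := by
  funext Q
  by_cases h : a Q = Q
  · by_cases h' : b Q = Q
    · rw [h, h']
    · have h1 := (hb (b Q) Q h').mpr rfl
      have h2 := (ha (b Q) Q h').mp h1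
      exact absurd (h2 ▸ h) h'
  · have h1 : τ (a Q) = Q := (ha (a Q) Q h).mpr rfl
    have h2 : b Q = a Q := (hb (a Q) Q h).mp h1
    rw [h2]

/-- Every token of a medium has a reverse within `T`. -/
theorem exists_reverse {T : Set (S → S)} (hM : IsMedium T) {τ : S → S} (hτ : τ ∈ T) :
    ∃ τ' ∈ T, IsReverse τ τ' := by
  obtain ⟨⟨_, _, hid⟩, hMa, hMb⟩ := hM
  have hne : ∃ P : S, τ P ≠ P := by
    by_contra h
    push_neg at h
    exact hid τ hτ (funext h)
  obtain ⟨P, hP⟩ := hne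
  obtain ⟨w, hw, hwP⟩ := hMa (τ P) P hP
  set u : List (S → S) := τ :: w with hu
  have hmsg : IsMsg T u := by
    intro x hx
    rcases List.mem_cons.mp hx with rfl | hx
    · exact hτ
    · exact hw.1 x hx
  have hret : IsReturn u P := by
    refine ⟨⟨hP, hw.2.2.1⟩, ?_⟩
    rw [hu, mApply_cons, hwP]
  obtain ⟨σ, -, -, hrev⟩ := hMb u P hmsg hret
  have hlen : 0 < u.length := by simp [hu]
  have h0 := hrev ⟨0, hlen⟩
  refine ⟨u.get (σ ⟨0, hlen⟩), ?_, h0⟩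
  exact hmsg _ (List.get_mem u (σ ⟨0, hlen⟩))

/-- A reverse list exists for any message of `T`. -/
theorem exists_revList {T : Set (S → S)} (hM : IsMedium T) {m : List (S → S)}
    (hm : IsMsg T m) :
    ∃ mr, List.Forall₂ (fun a b => b ∈ T ∧ IsReverse a b) m mr := by
  induction m with
  | nil => exact ⟨[], List.Forall₂.nil⟩
  | cons τ l ih =>
    obtain ⟨lr, hlr⟩ := ih (fun x hx => hm x (List.mem_cons_of_mem _ hx))
    obtain ⟨τ', hτ'T, hτ'⟩ := exists_reverse hM (hm τ (List.mem_cons_self))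
    exact ⟨τ' :: lr, List.Forall₂.cons ⟨hτ'T, hτ'⟩ hlr⟩

theorem revList_apply {m mr : List (S → S)} (h : List.Forall₂ IsReverse m mr) {P : S}
    (hs : StepwiseEff m P) :
    StepwiseEff mr.reverse (mApply m P) ∧ mApply mr.reverse (mApply m P) = P := by
  induction h generalizing P with
  | nil => exact ⟨trivial, rfl⟩
  | @cons a b l lr hab hl ih =>
    obtain ⟨hP, hs'⟩ := hs
    obtain ⟨ih1, ih2⟩ := ih hs'
    have hb : b (a P) = P := (hab P (a P) (Ne.symm hP)).mp rfl
    rw [mApply_cons]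
    constructor
    · rw [List.reverse_cons, stepwiseEff_append, ih2]
      exact ⟨ih1, by rw [hb]; exact Ne.symm hP, trivial⟩
    · rw [List.reverse_cons, mApply_append, ih2]
      exact hb

theorem forall₂_mem_right {α β : Type*} {R : α → β → Prop} {l₁ : List α} {l₂ : List β}
    (h : List.Forall₂ R l₁ l₂) {b : β} (hb : b ∈ l₂) : ∃ a ∈ l₁, R a b := by
  induction h with
  | nil => simp at hb
  | cons hab h ih =>
    rcases List.mem_cons.mp hb with rfl | hb
    · exact ⟨_, List.mem_cons_self, hab⟩
    · obtain ⟨a, ha, hR⟩ := ih hb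
      exact ⟨a, List.mem_cons_of_mem _ ha, hR⟩

theorem forall₂_mem_left {α β : Type*} {R : α → β → Prop} {l₁ : List α} {l₂ : List β}
    (h : List.Forall₂ R l₁ l₂) {a : α} (ha : a ∈ l₁) : ∃ b ∈ l₂, R a b := by
  induction h with
  | nil => simp at ha
  | cons hab h ih =>
    rcases List.mem_cons.mp ha with rfl | ha
    · exact ⟨_, List.mem_cons_self, hab⟩
    · obtain ⟨b, hb, hR⟩ := ih ha
      exact ⟨b, List.mem_cons_of_mem _ hb, hR⟩

theorem revList_consistent {m mr : List (S → S)}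
    (h : List.Forall₂ IsReverse m mr) (hc : Consistent m) : Consistent mr := by
  intro a' ha' b' hb' hrev
  obtain ⟨a, ha, haa'⟩ := forall₂_mem_right h ha'
  obtain ⟨b, hb, hbb'⟩ := forall₂_mem_right h hb'
  -- reverses of a' : b' and a  (IsReverse a' b' given; IsReverse a' a by symm)
  have hab : a = b' := isReverse_unique haa'.symm' hrev
  have hba : IsReverse b a := by rw [hab]; exact hbb'
  exact hc b hb a ha hba

theorem revList_nodup {m mr : List (S → S)}
    (h : List.Forall₂ IsReverse m mr) (hn : m.Nodup) : mr.Nodup := by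
  rw [List.nodup_iff_injective_get] at hn ⊢
  have hlen := h.length_eq
  have hget := List.forall₂_iff_get.mp h |>.2
  intro i j hij
  have h1 : IsReverse (mr.get i) (m.get ⟨i.1, by omega⟩) :=
    (hget i.1 (by omega) i.2).symm'
  have h2 : IsReverse (mr.get j) (m.get ⟨j.1, by omega⟩) :=
    (hget j.1 (by omega) j.2).symm'
  rw [hij] at h1
  have heq := isReverse_unique h1 h2
  exact Fin.ext (by simpa using congrArg Fin.val (hn heq))

/-- Core lemma for the forward direction: if `m ++ r` is a return message where `r`
consists of reverses of tokens of `n`, then every token of `m` occurs in `n`. -/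
theorem content_subset_of_return {T : Set (S → S)} (hM : IsMedium T)
    {m n r : List (S → S)} {P : S}
    (hmsg : IsMsg T (m ++ r)) (hret : IsReturn (m ++ r) P)
    (hcm : Consistent m) (hcr : Consistent r)
    (hmem : ∀ b ∈ r, ∃ a ∈ n, IsReverse a b) :
    msgContent m ⊆ msgContent n := by
  obtain ⟨σ, hfix, hinv, hvac⟩ := hM.2.2 _ P hmsg hret
  intro τ hτ
  obtain ⟨i, hgi⟩ := List.mem_iff_get.mp hτ
  have hiu : i.1 < (m ++ r).length := by simp; omega
  set iu : Fin (m ++ r).length := ⟨i.1, hiu⟩ with hiu_def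
  have hui : (m ++ r).get iu = τ := by
    rw [List.get_eq_getElem, List.getElem_append_left i.2]
    rw [← hgi, List.get_eq_getElem]
  have hrev := hvac iu
  rw [hui] at hrev
  set j := σ iu with hj
  by_cases hjm : j.1 < m.length
  · exfalso
    have hjmem : (m ++ r).get j ∈ m := by
      rw [List.get_eq_getElem, List.getElem_append_left hjm]
      exact List.getElem_mem _
    exact hcm τ hτ _ hjmem hrev
  · push_neg at hjm
    have hjr : j.1 - m.length < r.length := by
      have := j.2; simp at this; omega
    have hjmem : (m ++ r).get j ∈ r := by
      rw [List.get_eq_getElem, List.getElem_append_right hjm]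
      exact List.getElem_mem _
    obtain ⟨a, ha, hab⟩ := hmem _ hjmem
    have : τ = a := isReverse_unique hrev.symm' hab.symm'
    exact this ▸ ha

/-- Core lemma for the backward direction: a return message `m ++ w ++ r` where `r`
consists of reverses of the tokens of `m` (in the sense of `H1`/`H2`) forces `w = []`. -/
theorem no_detour {T : Set (S → S)} (hM : IsMedium T)
    {m w r : List (S → S)} {P : S}
    (hmsg : IsMsg T (m ++ w ++ r)) (hret : IsReturn (m ++ w ++ r) P)
    (hcm : Consistent m) (hnm : m.Nodup)
    (hcw : Consistent w) (hwne : w ≠ [])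
    (hcr : Consistent r) (hnr : r.Nodup)
    (H1 : ∀ a ∈ m, ∃ b ∈ r, IsReverse a b)
    (H2 : ∀ b ∈ r, ∃ a ∈ m, IsReverse a b) : False := by
  obtain ⟨σ, hfix, hinv, hvac⟩ := hM.2.2 _ P hmsg hret
  have hulen : (m ++ w ++ r).length = m.length + w.length + r.length := by simp [Nat.add_assoc]
  have hget1 : ∀ (i : Fin (m ++ w ++ r).length) (h : i.1 < m.length),
      (m ++ w ++ r).get i = m[i.1]'h := by
    intro i h
    have h2 : i.1 < (m ++ w).length := by simp; omega
    exact (List.get_eq_getElem).trans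
      ((List.getElem_append_left h2).trans (List.getElem_append_left h))
  have hget2 : ∀ (i : Fin (m ++ w ++ r).length) (h1 : m.length ≤ i.1)
      (h2 : i.1 < m.length + w.length),
      (m ++ w ++ r).get i = w[i.1 - m.length]'(by omega) := by
    intro i h1 h2
    have h3 : i.1 < (m ++ w).length := by simp; omega
    exact (List.get_eq_getElem).trans
      ((List.getElem_append_left h3).trans (List.getElem_append_right h1))
  have hget3 : ∀ (i : Fin (m ++ w ++ r).length) (h1 : m.length + w.length ≤ i.1),
      (m ++ w ++ r).get i = r[i.1 - (m.length + w.length)]'(by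
        have := i.2; simp at this; omega) := by
    intro i h1
    have h3 : (m ++ w).length ≤ i.1 := by simp; omega
    exact (List.get_eq_getElem).trans
      ((List.getElem_append_right h3).trans (getElem_congr rfl (by simp) _))
  -- Case A: some token of `m` is matched with a token of `w`.
  have caseA : ∀ (i : Fin (m ++ w ++ r).length), i.1 < m.length →
      m.length ≤ (σ i).1 → (σ i).1 < m.length + w.length → False := by
    intro i hiM hp1 hp2
    have hvi := hvac i
    rw [hget1 i hiM, hget2 (σ i) hp1 hp2] at hvi
    -- hvi : IsReverse m[i.1] w[(σ i).1 - m.length]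
    obtain ⟨b, hb, hab⟩ := H1 _ (List.getElem_mem hiM)
    obtain ⟨j0, hj0⟩ := List.mem_iff_get.mp hb
    have hjuv : m.length + w.length + j0.1 < (m ++ w ++ r).length := by
      have := j0.2; simp; omega
    have hjget : (m ++ w ++ r).get ⟨m.length + w.length + j0.1, hjuv⟩ = b := by
      rw [hget3 _ (by simp)]
      rw [← hj0, List.get_eq_getElem]
      exact getElem_congr rfl
        (by show m.length + w.length + j0.1 - (m.length + w.length) = j0.1; omega) _
    have hvj := hvac ⟨m.length + w.length + j0.1, hjuv⟩
    rw [hjget] at hvj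
    rcases Nat.lt_or_ge (σ ⟨m.length + w.length + j0.1, hjuv⟩).1 m.length with hq | hq
    · -- partner in the `m` part
      rw [hget1 _ hq] at hvj
      have heq : m[(σ ⟨m.length + w.length + j0.1, hjuv⟩).1]'hq = m[i.1]'hiM :=
        isReverse_unique hvj hab.symm'
      have hfe : σ ⟨m.length + w.length + j0.1, hjuv⟩ = ⟨i.1, by omega⟩ := by
        have h5 := List.nodup_iff_injective_getElem.mp hnm
          (a₁ := ⟨(σ ⟨m.length + w.length + j0.1, hjuv⟩).1, hq⟩) (a₂ := ⟨i.1, hiM⟩) heq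
        have hval := congrArg Fin.val h5
        exact Fin.ext (by simpa using hval)
      have hii : (⟨i.1, by omega⟩ : Fin (m ++ w ++ r).length) = i := Fin.ext rfl
      rw [hii] at hfe
      have : σ i = ⟨m.length + w.length + j0.1, hjuv⟩ := by
        rw [← hfe, hinv]
      rw [this] at hp2
      simp at hp2
    · rcases Nat.lt_or_ge (σ ⟨m.length + w.length + j0.1, hjuv⟩).1 (m.length + w.length)
        with hq2 | hq2
      · -- partner in the `w` part
        rw [hget2 _ hq hq2] at hvj
        have : w[(σ ⟨m.length + w.length + j0.1, hjuv⟩).1 - m.length]'(by omega)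
            = m[i.1]'hiM := isReverse_unique hvj hab.symm'
        have hfin : IsReverse
            (w[(σ ⟨m.length + w.length + j0.1, hjuv⟩).1 - m.length]'(by omega))
            (w[(σ i).1 - m.length]'(by omega)) := by rw [this]; exact hvi
        exact hcw _ (List.getElem_mem _) _ (List.getElem_mem _) hfin
      · -- partner in the `r` part: contradicts consistency of `r`
        rw [hget3 _ hq2] at hvj
        exact hcr _ hb _ (List.getElem_mem _) hvj
  -- Case B: some token of `r` is matched with a token of `w`.
  have caseB : ∀ (j : Fin (m ++ w ++ r).length), m.length + w.length ≤ j.1 →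
      m.length ≤ (σ j).1 → (σ j).1 < m.length + w.length → False := by
    intro j hjR hp1 hp2
    have hvj := hvac j
    rw [hget3 j hjR, hget2 (σ j) hp1 hp2] at hvj
    -- hvj : IsReverse r[..] w[..]
    have hjr_mem : (r[j.1 - (m.length + w.length)]'(by
        have := j.2; simp at this; omega)) ∈ r := List.getElem_mem _
    obtain ⟨a, ha, hab⟩ := H2 _ hjr_mem
    obtain ⟨i0, hi0⟩ := List.mem_iff_get.mp ha
    have hiuv : i0.1 < (m ++ w ++ r).length := by have := i0.2; simp; omega
    have higet : (m ++ w ++ r).get ⟨i0.1, hiuv⟩ = a := by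
      rw [hget1 _ i0.2, ← hi0, List.get_eq_getElem]
    have hvi := hvac ⟨i0.1, hiuv⟩
    rw [higet] at hvi
    rcases Nat.lt_or_ge (σ ⟨i0.1, hiuv⟩).1 m.length with hq | hq
    · -- partner in the `m` part: contradicts consistency of `m`
      rw [hget1 _ hq] at hvi
      have haM : a ∈ m := ha
      exact hcm _ haM _ (List.getElem_mem _) hvi
    · rcases Nat.lt_or_ge (σ ⟨i0.1, hiuv⟩).1 (m.length + w.length) with hq2 | hq2
      · -- partner in the `w` part
        rw [hget2 _ hq hq2] at hvi
        -- hvi : IsReverse a w[..]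
        have : w[(σ j).1 - m.length]'(by omega) = a := isReverse_unique hvj hab.symm'
        have hfin : IsReverse (w[(σ j).1 - m.length]'(by omega))
            (w[(σ ⟨i0.1, hiuv⟩).1 - m.length]'(by omega)) := by rw [this]; exact hvi
        exact hcw _ (List.getElem_mem _) _ (List.getElem_mem _) hfin
      · -- partner in the `r` part
        rw [hget3 _ hq2] at hvi
        have heq : (r[(σ ⟨i0.1, hiuv⟩).1 - (m.length + w.length)]'(by
              have := (σ ⟨i0.1, hiuv⟩).2; simp at this; omega)) =
            (r[j.1 - (m.length + w.length)]'(by have := j.2; simp at this; omega)) :=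
          isReverse_unique hvi hab
        have hfe : σ ⟨i0.1, hiuv⟩ = j := by
          have := List.nodup_iff_injective_getElem.mp hnr
            (a₁ := ⟨(σ ⟨i0.1, hiuv⟩).1 - (m.length + w.length), by
              have := (σ ⟨i0.1, hiuv⟩).2; simp at this; omega⟩)
            (a₂ := ⟨j.1 - (m.length + w.length), by
              have := j.2; simp at this; omega⟩) heq
          have hval := congrArg Fin.val this
          simp at hval
          exact Fin.ext (by omega)
        have : σ j = ⟨i0.1, hiuv⟩ := by rw [← hfe, hinv]
        rw [this] at hp1
        simp at hp1
        have := i0.2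
        omega
  -- Now pick the first token of `w` and consider its partner.
  have hw0 : 0 < w.length := List.length_pos_iff.mpr hwne
  have hpv : m.length < (m ++ w ++ r).length := by simp; omega
  rcases Nat.lt_or_ge (σ ⟨m.length, hpv⟩).1 m.length with hq | hq
  · -- partner in `m`: apply case A with i := σ p0
    have h1 : m.length ≤ (σ (σ ⟨m.length, hpv⟩)).1 := by rw [hinv]
    have h2 : (σ (σ ⟨m.length, hpv⟩)).1 < m.length + w.length := by rw [hinv]; simp; omega
    exact caseA (σ ⟨m.length, hpv⟩) hq h1 h2
  · rcases Nat.lt_or_ge (σ ⟨m.length, hpv⟩).1 (m.length + w.length) with hq2 | hq2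
    · -- partner in `w`: contradicts consistency of `w`
      have hv := hvac ⟨m.length, hpv⟩
      rw [hget2 ⟨m.length, hpv⟩ (le_refl _) (by simp; omega), hget2 (σ ⟨m.length, hpv⟩) hq hq2]
        at hv
      exact hcw _ (List.getElem_mem _) _ (List.getElem_mem _) hv
    · -- partner in `r`: apply case B with j := σ p0
      have h1 : m.length ≤ (σ (σ ⟨m.length, hpv⟩)).1 := by rw [hinv]
      have h2 : (σ (σ ⟨m.length, hpv⟩)).1 < m.length + w.length := by rw [hinv]; simp; omega
      exact caseB (σ ⟨m.length, hpv⟩) hq2 h1 h2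

theorem consistent_reverse {l : List (S → S)} (h : Consistent l) : Consistent l.reverse := by
  intro a ha b hb
  rw [List.mem_reverse] at ha hb
  exact h a ha b hb

/-- Two concise messages transforming a state `P` produce the same state
iff they have the same content. -/
theorem stmt3 {T : Set (S → S)} (hM : IsMedium T) (P : S)
    (m n : List (S → S)) (hm : Concise T m P) (hn : Concise T n P) :
    mApply m P = mApply n P ↔ msgContent m = msgContent n := by
  obtain ⟨hmmsg, hmcons, hmeff, hmnd⟩ := hm
  obtain ⟨hnmsg, hncons, hneff, hnnd⟩ := hn
  obtain ⟨mr, hmr⟩ := exists_revList hM hmmsg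
  obtain ⟨nr, hnr⟩ := exists_revList hM hnmsg
  have hmrT : IsMsg T mr := by
    intro b hb
    obtain ⟨a, -, hT, -⟩ := forall₂_mem_right hmr hb
    exact hT
  have hnrT : IsMsg T nr := by
    intro b hb
    obtain ⟨a, -, hT, -⟩ := forall₂_mem_right hnr hb
    exact hT
  have hmrR : List.Forall₂ IsReverse m mr := List.Forall₂.imp (fun _ _ h => h.2) hmr
  have hnrR : List.Forall₂ IsReverse n nr := List.Forall₂.imp (fun _ _ h => h.2) hnr
  obtain ⟨hmre, hmra⟩ := revList_apply hmrR hmeff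
  obtain ⟨hnre, hnra⟩ := revList_apply hnrR hneff
  constructor
  · -- equal endpoints → equal contents
    intro heq
    have dir : ∀ (x xr y : List (S → S)), Consistent x → Consistent y →
        IsMsg T x → IsMsg T xr → List.Forall₂ IsReverse y xr →
        StepwiseEff x P → StepwiseEff xr.reverse (mApply x P) →
        mApply xr.reverse (mApply x P) = P →
        msgContent x ⊆ msgContent y := by
      intro x xr y hcx hcy hxT hxrT hrel hse hse' happ
      refine content_subset_of_return hM (n := y) (P := P) ?_ ⟨?_, ?_⟩ hcx
        (consistent_reverse (revList_consistent hrel hcy)) ?_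
      · intro τ hτ
        rcases List.mem_append.mp hτ with h | h
        · exact hxT τ h
        · exact hxrT τ (List.mem_reverse.mp h)
      · exact stepwiseEff_append.mpr ⟨hse, hse'⟩
      · rw [mApply_append, happ]
      · intro b hb
        exact forall₂_mem_right hrel (List.mem_reverse.mp hb)
    apply Set.Subset.antisymm
    · exact dir m nr n hmcons hncons hmmsg hnrT hnrR hmeff (heq ▸ hnre) (heq ▸ hnra)
    · exact dir n mr m hncons hmcons hnmsg hmrT hmrR hneff (heq ▸ hmre) (heq ▸ hmra)
  · -- equal contents → equal endpoints
    intro hceq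
    by_contra hne
    have hmem : ∀ τ, τ ∈ m ↔ τ ∈ n := fun τ => Set.ext_iff.mp hceq τ
    obtain ⟨w, ⟨hwmsg, hwcons, hweff, hwnd⟩, hwQ⟩ := hM.2.1 (mApply m P) (mApply n P) hne
    have hwne : w ≠ [] := by
      rintro rfl
      exact hne hwQ
    refine no_detour hM (m := m) (w := w) (r := nr.reverse) (P := P) ?_ ⟨?_, ?_⟩
      hmcons hmnd hwcons hwne
      (consistent_reverse (revList_consistent hnrR hncons))
      (List.nodup_reverse.mpr (revList_nodup hnrR hnnd)) ?_ ?_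
    · intro τ hτ
      rcases List.mem_append.mp hτ with h | h
      · rcases List.mem_append.mp h with h' | h'
        · exact hmmsg τ h'
        · exact hwmsg τ h'
      · exact hnrT τ (List.mem_reverse.mp h)
    · rw [stepwiseEff_append, stepwiseEff_append, mApply_append]
      exact ⟨⟨hmeff, hweff⟩, hwQ ▸ hnre⟩
    · rw [mApply_append, mApply_append, hwQ]
      exact hnra
    · intro a ha
      obtain ⟨b, hb, hr⟩ := forall₂_mem_left hnrR ((hmem a).mp ha)
      exact ⟨b, List.mem_reverse.mpr hb, hr⟩
    · intro b hb
      obtain ⟨a, ha, hr⟩ := forall₂_mem_right hnrR (List.mem_reverse.mp hb)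
      exact ⟨a, (hmem a).mpr ha, hr⟩
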